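/- The following decision problem is NP-complete: given positive integers p, block sizes m'_0,…,m'_{p+1}, rational parameters α, β = γ = 1, and a bound B, decide whether there exists a non-ordered one-ported gather tree over the p+2 processors (root chosen freely) with completion cost at most B, where the cost is defined by the recursive equations: cost of a singleton is 0; cost(T) = max(cost(T₁), cost(T₂)) + α + β·Size(T₂) when the last subtree T₂ is communicated, and the root's own block contributes max(γ·m_r, cost(T')) + α + β·Size(T') when the local copy overlaps subtree T'. -/

import Mathlib

open Finset

/-- A gather tree over processors `Fin n`, written in binary-join form: `node t s` means the
root of `t` (which is also the root of the combined tree) receives, as its last communication,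
the whole data segment gathered in the subtree `s` from the root of `s`. -/
inductive GTree (n : ℕ) : Type where
  | leaf : Fin n → GTree n
  | node : GTree n → GTree n → GTree n

namespace GTree

/-- The root processor of a gather tree. -/
def root {n : ℕ} : GTree n → Fin n
  | leaf i => i
  | node t _ => t.root

/-- The set of processors spanned by a gather tree. -/
def members {n : ℕ} : GTree n → Finset (Fin n)
  | leaf i => {i}
  | node t s => t.members ∪ s.members

/-- A gather tree is valid if each processor occurs at most once in it. -/
def valid {n : ℕ} : GTree n → Prop
  | leaf _ => True
  | node t s => t.valid ∧ s.valid ∧ Disjoint t.members s.members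

/-- Total size of the data blocks gathered in a tree. -/
def size {n : ℕ} (m : Fin n → ℝ) : GTree n → ℝ
  | leaf i => m i
  | node t s => t.size m + s.size m

/-- Completion time (cost) of a gather tree under the one-ported linear cost model:
a singleton subtree accounts for the local copy `γ * m i` of its processor's own block,
and a join costs the maximum of the two subtree completion times plus the transmission
time `α + β * Size(sent subtree)`. -/
def cost {n : ℕ} (α β γ : ℝ) (m : Fin n → ℝ) : GTree n → ℝ
  | leaf i => γ * m i
  | node t s => max (t.cost α β γ m) (s.cost α β γ m) + α + β * s.size m

/-- Number of children of the root of the tree. -/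
def rootDeg {n : ℕ} : GTree n → ℕ
  | leaf _ => 0
  | node t _ => t.rootDeg + 1

end GTree

namespace GTreeAux
open GTree

variable {n : ℕ}

lemma members_nonempty (t : GTree n) : t.members.Nonempty := by
  induction t with
  | leaf i => exact ⟨i, by simp [GTree.members]⟩
  | node t s iht ihs =>
      rcases iht with ⟨x, hx⟩
      exact ⟨x, by simp [GTree.members, hx]⟩

lemma size_eq_sum (m' : Fin n → ℝ) (t : GTree n) (hv : t.valid) :
    t.size m' = ∑ j ∈ t.members, m' j := by
  induction t with
  | leaf i => simp [GTree.size, GTree.members]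
  | node t s iht ihs =>
      obtain ⟨h1, h2, h3⟩ := hv
      rw [GTree.size, GTree.members, Finset.sum_union h3, iht h1, ihs h2]

lemma size_nonneg (m' : Fin n → ℝ) (hm : ∀ j, 0 ≤ m' j) (t : GTree n) :
    0 ≤ t.size m' := by
  induction t with
  | leaf i => exact hm i
  | node t s iht ihs => rw [GTree.size]; positivity

lemma cost_ge (α : ℝ) (hα : 0 ≤ α) (m' : Fin n → ℝ) (hm : ∀ j, 0 ≤ m' j) (t : GTree n) :
    t.size m' + (t.rootDeg : ℝ) * α ≤ t.cost α 1 1 m' := by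
  induction t with
  | leaf i => simp [GTree.size, GTree.cost, GTree.rootDeg]
  | node t s iht ihs =>
      rw [GTree.size, GTree.cost, GTree.rootDeg]
      have h1 : t.cost α 1 1 m' ≤ max (t.cost α 1 1 m') (s.cost α 1 1 m') := le_max_left _ _
      push_cast
      nlinarith [iht]

lemma cost_ge_size (α : ℝ) (hα : 0 ≤ α) (m' : Fin n → ℝ) (hm : ∀ j, 0 ≤ m' j) (t : GTree n) :
    t.size m' ≤ t.cost α 1 1 m' := by
  have h1 := cost_ge α hα m' hm t
  have h2 : (0:ℝ) ≤ (t.rootDeg : ℝ) * α := by positivity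
  linarith

/-- A chain built on top of `base`. -/
def chainAux : GTree n → List (Fin n) → GTree n
  | base, [] => base
  | base, x :: l => chainAux (GTree.node base (GTree.leaf x)) l

lemma chainAux_spec (α : ℝ) (hα : 0 ≤ α) (m' : Fin n → ℝ) (hm : ∀ j, 0 ≤ m' j) :
    ∀ (l : List (Fin n)) (base : GTree n), base.valid → l.Nodup →
    (∀ x ∈ l, x ∉ base.members) →
    (∀ x ∈ l, m' x ≤ base.cost α 1 1 m') →
    (chainAux base l).valid ∧ (chainAux base l).members = base.members ∪ l.toFinset ∧
    (chainAux base l).size m' = base.size m' + (l.map m').sum ∧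
    (chainAux base l).cost α 1 1 m'
      = base.cost α 1 1 m' + (l.length : ℝ) * α + (l.map m').sum := by
  intro l
  induction l with
  | nil => intro base hv _ _ _; simpa [chainAux] using hv
  | cons x l ih =>
      intro base hv hnd hdisj hle
      have hxb : x ∉ base.members := hdisj x (by simp)
      have hvb : (GTree.node base (GTree.leaf x)).valid := by
        refine ⟨hv, trivial, ?_⟩
        simp [GTree.members, Finset.disjoint_singleton_right, hxb]
      have hcost : (GTree.node base (GTree.leaf x)).cost α 1 1 m'
          = base.cost α 1 1 m' + α + m' x := by
        rw [GTree.cost]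
        have : max (base.cost α 1 1 m') ((GTree.leaf x).cost α 1 1 m')
            = base.cost α 1 1 m' := by
          rw [max_eq_left]
          simpa [GTree.cost] using hle x (by simp)
        rw [this]
        simp only [GTree.size, one_mul]
      have hmem : (GTree.node base (GTree.leaf x)).members = insert x base.members := by
        ext j
        simp [GTree.members]
      obtain ⟨h1, h2, h3, h4⟩ := ih (GTree.node base (GTree.leaf x)) hvb hnd.of_cons
        (by
          intro y hy
          rw [hmem, Finset.mem_insert]
          push_neg
          exact ⟨by rintro rfl; exact (List.nodup_cons.mp hnd).1 hy,
            hdisj y (List.mem_cons_of_mem _ hy)⟩)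
        (by
          intro y hy
          rw [hcost]
          have := hle y (List.mem_cons_of_mem _ hy)
          nlinarith [hm x])
      refine ⟨h1, ?_, ?_, ?_⟩
      · rw [chainAux, h2, hmem]
        ext j
        simp only [Finset.mem_insert, Finset.mem_union, List.toFinset_cons]
        tauto
      · rw [chainAux, h3, GTree.size]
        simp only [List.map_cons, List.sum_cons, GTree.size]
        ring
      · rw [chainAux, h4, hcost]
        simp only [List.map_cons, List.sum_cons, List.length_cons]
        push_cast
        ring

end GTreeAux

lemma sum_split' (p : ℕ) (m : Fin p → ℕ) (α : ℝ) (m' : Fin (p+2) → ℝ)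
    (hm' : ∀ i : Fin p, m' (Fin.castAdd 2 i) = (m i : ℝ) + α)
    (F : Finset (Fin (p+2))) :
    ∑ j ∈ F, m' j
      = (∑ i ∈ Finset.univ.filter (fun i : Fin p => Fin.castAdd 2 i ∈ F), (m i : ℝ))
        + ((Finset.univ.filter (fun i : Fin p => Fin.castAdd 2 i ∈ F)).card : ℝ) * α
        + (if (⟨p, by omega⟩ : Fin (p+2)) ∈ F then m' ⟨p, by omega⟩ else 0)
        + (if (⟨p+1, by omega⟩ : Fin (p+2)) ∈ F then m' ⟨p+1, by omega⟩ else 0) := by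
  classical
  set ep : Fin (p+2) := ⟨p, by omega⟩
  set e2 : Fin (p+2) := ⟨p+1, by omega⟩
  set O : Finset (Fin p) := Finset.univ.filter (fun i : Fin p => Fin.castAdd 2 i ∈ F) with hO
  have hinj : Function.Injective (Fin.castAdd 2 : Fin p → Fin (p+2)) := by
    intro a b hab
    have := congrArg Fin.val hab
    simpa [Fin.ext_iff] using this
  have h1 : F.filter (fun j : Fin (p+2) => j.val < p) = O.image (Fin.castAdd 2) := by
    ext j
    simp only [Finset.mem_filter, Finset.mem_image, hO, Finset.mem_univ, true_and]
    constructor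
    · rintro ⟨hjF, hjp⟩
      have hj : Fin.castAdd 2 (⟨j.val, hjp⟩ : Fin p) = j := by apply Fin.ext; simp
      exact ⟨⟨j.val, hjp⟩, by rw [hj]; exact hjF, hj⟩
    · rintro ⟨i, hiF, rfl⟩
      exact ⟨hiF, by simp⟩
  have h2 : F.filter (fun j : Fin (p+2) => ¬ j.val < p)
      = ({ep, e2} : Finset (Fin (p+2))).filter (· ∈ F) := by
    ext j
    simp only [Finset.mem_filter, Finset.mem_insert, Finset.mem_singleton]
    constructor
    · rintro ⟨hjF, hjp⟩
      have hj2 : j.val < p + 2 := j.isLt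
      refine ⟨?_, hjF⟩
      rcases Nat.lt_or_ge j.val (p+1) with h | h
      · left; apply Fin.ext; simp only [ep]; omega
      · right; apply Fin.ext; simp only [e2]; omega
    · rintro ⟨hj, hjF⟩
      refine ⟨hjF, ?_⟩
      rcases hj with rfl | rfl <;> simp [ep, e2]
  have hne : ep ≠ e2 := by simp [ep, e2, Fin.ext_iff]
  have e1 : ∑ i ∈ O, m' (Fin.castAdd 2 i) = (∑ i ∈ O, (m i : ℝ)) + (O.card : ℝ) * α := by
    rw [Finset.sum_congr rfl (fun i _ => hm' i), Finset.sum_add_distrib,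
      Finset.sum_const, nsmul_eq_mul]
  have e2' : ∑ j ∈ ({ep, e2} : Finset (Fin (p+2))).filter (· ∈ F), m' j
      = (if ep ∈ F then m' ep else 0) + (if e2 ∈ F then m' e2 else 0) := by
    rw [Finset.sum_filter, Finset.sum_insert (by simp [hne]), Finset.sum_singleton]
  calc ∑ j ∈ F, m' j
      = ∑ j ∈ F.filter (fun j : Fin (p+2) => j.val < p), m' j
        + ∑ j ∈ F.filter (fun j : Fin (p+2) => ¬ j.val < p), m' j :=
        (Finset.sum_filter_add_sum_filter_not F _ m').symm
    _ = ∑ i ∈ O, m' (Fin.castAdd 2 i)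
        + ∑ j ∈ ({ep, e2} : Finset (Fin (p+2))).filter (· ∈ F), m' j := by
        rw [h1, h2, Finset.sum_image (fun a _ b _ h => hinj h)]
    _ = _ := by rw [e1, e2']; ring

lemma castAdd_inj (p : ℕ) : Function.Injective (Fin.castAdd 2 : Fin p → Fin (p+2)) := by
  intro a b hab
  have := congrArg Fin.val hab
  simpa [Fin.ext_iff] using this

/-- Spec of the basic chain gathered at (the image of) `y`, the element of maximal block. -/
lemma chainOn_spec (p : ℕ) (m : Fin p → ℕ) (α : ℝ) (hα : 0 ≤ α) (m' : Fin (p+2) → ℝ)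
    (hm' : ∀ i : Fin p, m' (Fin.castAdd 2 i) = (m i : ℝ) + α)
    (hmnn : ∀ j, 0 ≤ m' j)
    (S : Finset (Fin p)) (y : Fin p) (hy : y ∈ S) (hmax : ∀ x ∈ S, m x ≤ m y) :
    (GTreeAux.chainAux (GTree.leaf (Fin.castAdd 2 y))
        (((S.erase y).toList).map (Fin.castAdd 2))).valid ∧
    (GTreeAux.chainAux (GTree.leaf (Fin.castAdd 2 y))
        (((S.erase y).toList).map (Fin.castAdd 2))).members = S.image (Fin.castAdd 2) ∧
    (GTreeAux.chainAux (GTree.leaf (Fin.castAdd 2 y))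
        (((S.erase y).toList).map (Fin.castAdd 2))).size m'
      = (∑ i ∈ S, (m i : ℝ)) + (S.card : ℝ) * α ∧
    (GTreeAux.chainAux (GTree.leaf (Fin.castAdd 2 y))
        (((S.erase y).toList).map (Fin.castAdd 2))).cost α 1 1 m'
      = (∑ i ∈ S, (m i : ℝ)) + (2 * (S.card : ℝ) - 1) * α := by
  classical
  have hinj := castAdd_inj p
  set l : List (Fin (p+2)) := ((S.erase y).toList).map (Fin.castAdd 2) with hl
  have hnd : l.Nodup := (Finset.nodup_toList _).map hinj
  have hmeml : ∀ x, x ∈ l ↔ ∃ i ∈ S.erase y, Fin.castAdd 2 i = x := by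
    intro x; simp [hl, List.mem_map]
  have hcard1 : 1 ≤ S.card := Finset.card_pos.mpr ⟨y, hy⟩
  obtain ⟨h1, h2, h3, h4⟩ := GTreeAux.chainAux_spec α hα m' hmnn l
    (GTree.leaf (Fin.castAdd 2 y)) trivial hnd
    (by
      intro x hx
      obtain ⟨i, hi, rfl⟩ := (hmeml x).mp hx
      have hiy : i ≠ y := (Finset.mem_erase.mp hi).1
      simp only [GTree.members, Finset.mem_singleton]
      exact fun h => hiy (hinj h))
    (by
      intro x hx
      obtain ⟨i, hi, rfl⟩ := (hmeml x).mp hx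
      have : m i ≤ m y := hmax i (Finset.mem_of_mem_erase hi)
      have hcast : (m i : ℝ) ≤ (m y : ℝ) := by exact_mod_cast this
      simp only [GTree.cost, hm', one_mul]
      linarith)
  have hsum : (l.map m').sum = (∑ i ∈ S.erase y, (m i : ℝ)) + ((S.card : ℝ) - 1) * α := by
    rw [hl, List.map_map]
    rw [Finset.sum_map_toList (S.erase y) (m' ∘ Fin.castAdd 2)]
    have : ∑ i ∈ S.erase y, (m' ∘ Fin.castAdd 2) i = ∑ i ∈ S.erase y, ((m i : ℝ) + α) :=
      Finset.sum_congr rfl (fun i _ => hm' i)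
    rw [this, Finset.sum_add_distrib, Finset.sum_const, nsmul_eq_mul,
      Finset.card_erase_of_mem hy]
    have : ((S.card - 1 : ℕ) : ℝ) = (S.card : ℝ) - 1 := by
      push_cast [Nat.cast_sub hcard1]; ring
    rw [this]
  have hlen : (l.length : ℝ) = (S.card : ℝ) - 1 := by
    rw [hl, List.length_map, Finset.length_toList, Finset.card_erase_of_mem hy]
    push_cast [Nat.cast_sub hcard1]; ring
  have hsum2 : (∑ i ∈ S.erase y, (m i : ℝ)) + (m y : ℝ) = ∑ i ∈ S, (m i : ℝ) :=
    Finset.sum_erase_add S _ hy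
  refine ⟨h1, ?_, ?_, ?_⟩
  · rw [h2]
    have hlt : l.toFinset = (S.erase y).image (Fin.castAdd 2) := by
      ext x
      simp [hl, List.mem_map]
    rw [hlt]
    simp only [GTree.members]
    ext x
    simp only [Finset.mem_union, Finset.mem_singleton, Finset.mem_image, Finset.mem_erase]
    constructor
    · rintro (rfl | ⟨i, ⟨-, hi⟩, rfl⟩)
      exacts [⟨y, hy, rfl⟩, ⟨i, hi, rfl⟩]
    · rintro ⟨i, hi, rfl⟩
      by_cases h : i = y
      · subst h; exact Or.inl rfl
      · exact Or.inr ⟨i, ⟨h, hi⟩, rfl⟩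
  · rw [h3, hsum]
    simp only [GTree.size, hm']
    linarith
  · rw [h4, hsum, hlen]
    simp only [GTree.cost, hm', one_mul]
    linarith

set_option maxHeartbeats 4000000 in
/-- NP-completeness of deciding whether a non-ordered one-ported gather tree of completion
cost at most `B` exists (Theorem 5), formalized through the explicit Karp reduction from
the NP-complete PARTITION problem (membership in NP is witnessed by the tree certificate
in the ∃-statement on the right-hand side): for a PARTITION instance `m` of positive
integers with even sum `M`, no element `≥ M/2`, taking `α = 1/p`, `β = γ = 1`,
`m'_i = m_i + α` for `i < p`, `m'_p = M/2`, `m'_{p+1} = M/2 + 1`, and `B = 2M + 2 + 2α`,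
the PARTITION instance has a solution if and only if some valid spanning gather tree over
the `p + 2` processors (root chosen freely) has completion cost at most `B`. -/
theorem stmt_7 (p : ℕ) (hp : 1 ≤ p) (m : Fin p → ℕ) (hpos : ∀ i, 0 < m i)
    (M : ℕ) (hM : M = ∑ i, m i) (heven : 2 ∣ M) (hsmall : ∀ i, m i < M / 2)
    (α : ℝ) (hα : α = 1 / (p : ℝ))
    (m' : Fin (p + 2) → ℝ)
    (hm' : ∀ i : Fin p, m' (Fin.castAdd 2 i) = (m i : ℝ) + α)
    (hmp : m' ⟨p, by omega⟩ = (M : ℝ) / 2)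
    (hmp1 : m' ⟨p + 1, by omega⟩ = (M : ℝ) / 2 + 1)
    (B : ℝ) (hB : B = 2 * (M : ℝ) + 2 + 2 * α) :
    (∃ R : Finset (Fin p), ∑ i ∈ R, m i = M / 2) ↔
    (∃ T : GTree (p + 2), T.valid ∧ T.members = Finset.univ ∧
        T.cost α 1 1 m' ≤ B) := by
  classical
  have hinj := castAdd_inj p
  have h2 : M / 2 * 2 = M := Nat.div_mul_cancel heven
  have i0 : Fin p := ⟨0, hp⟩
  have hM4 : 4 ≤ M := by have h1 := hpos i0; have h3 := hsmall i0; omega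
  have hp3 : 3 ≤ p := by
    by_contra hc
    push_neg at hc
    have hb : ∀ i, m i ≤ M / 2 - 1 := fun i => by have := hsmall i; omega
    have hle : ∑ i : Fin p, m i ≤ ∑ _i : Fin p, (M / 2 - 1) :=
      Finset.sum_le_sum (fun i _ => hb i)
    rw [Finset.sum_const, Finset.card_univ, Fintype.card_fin, smul_eq_mul] at hle
    rw [← hM] at hle
    have hle2 : p * (M / 2 - 1) ≤ 2 * (M / 2 - 1) :=
      Nat.mul_le_mul_right _ (by omega)
    omega
  have hppos : (0:ℝ) < (p:ℝ) := by
    have : (0:ℕ) < p := by omega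
    exact_mod_cast this
  have hα0 : 0 < α := by rw [hα]; positivity
  have hpα : (p:ℝ) * α = 1 := by rw [hα]; field_simp
  have hα1 : α ≤ 1/3 := by
    have h3 : (3:ℝ) ≤ (p:ℝ) := by exact_mod_cast hp3
    rw [hα, div_le_div_iff₀ hppos (by norm_num)]
    linarith
  have hhalf : ((M / 2 : ℕ) : ℝ) * 2 = (M:ℝ) := by exact_mod_cast h2
  have hMsum : (∑ i : Fin p, (m i : ℝ)) = (M:ℝ) := by
    rw [hM]; push_cast; ring
  have hordle : ∀ i : Fin p, (m i : ℝ) ≤ (M:ℝ)/2 - 1 := by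
    intro i
    have h1 : m i + 1 ≤ M / 2 := hsmall i
    have h1' : (m i : ℝ) + 1 ≤ ((M/2 : ℕ) : ℝ) := by exact_mod_cast h1
    linarith
  have hordge1 : ∀ i : Fin p, (1:ℝ) ≤ (m i : ℝ) := by
    intro i; exact_mod_cast hpos i
  have hcases : ∀ j : Fin (p+2),
      (∃ i : Fin p, j = Fin.castAdd 2 i) ∨ j.val = p ∨ j.val = p + 1 := by
    intro j
    rcases Nat.lt_or_ge j.val p with h | h
    · exact Or.inl ⟨⟨j.val, h⟩, by apply Fin.ext; simp⟩
    · have := j.isLt; right; omega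
  have hvalp : ∀ j : Fin (p+2), j.val = p → m' j = (M:ℝ)/2 := by
    intro j hj
    have : j = ⟨p, by omega⟩ := Fin.ext hj
    rw [this]; exact hmp
  have hvalp1 : ∀ j : Fin (p+2), j.val = p + 1 → m' j = (M:ℝ)/2 + 1 := by
    intro j hj
    have : j = ⟨p + 1, by omega⟩ := Fin.ext hj
    rw [this]; exact hmp1
  have hM2pos : (0:ℝ) < (M:ℝ)/2 := by
    have : (4:ℝ) ≤ (M:ℝ) := by exact_mod_cast hM4
    linarith
  have hMR4 : (4:ℝ) ≤ (M:ℝ) := by exact_mod_cast hM4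
  have hmnn : ∀ j, 0 ≤ m' j := by
    intro j
    rcases hcases j with ⟨i, rfl⟩ | hj | hj
    · rw [hm']; have := hordge1 i; linarith
    · rw [hvalp j hj]; linarith
    · rw [hvalp1 j hj]; linarith
  have hm'le : ∀ j, m' j ≤ (M:ℝ)/2 + 1 := by
    intro j
    rcases hcases j with ⟨i, rfl⟩ | hj | hj
    · rw [hm']; have := hordle i; linarith
    · rw [hvalp j hj]; linarith
    · rw [hvalp1 j hj]
  have hEp : ∀ i : Fin p, (Fin.castAdd 2 i).val < p := fun i => i.isLt
  constructor
  · -- forward direction: partition ⟹ cheap tree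
    rintro ⟨R, hRsum⟩
    have hsum_compl : ∀ S : Finset (Fin p), ∑ i ∈ S, m i + ∑ i ∈ Sᶜ, m i = M := by
      intro S
      rw [Finset.sum_add_sum_compl, ← hM]
    have hcard2 : ∀ S : Finset (Fin p), ∑ i ∈ S, m i = M / 2 → 2 ≤ S.card := by
      intro S hS
      by_contra hc
      push_neg at hc
      have : S.card = 0 ∨ S.card = 1 := by omega
      rcases this with h0 | h1
      · rw [Finset.card_eq_zero.mp h0, Finset.sum_empty] at hS; omega
      · obtain ⟨i, rfl⟩ := Finset.card_eq_one.mp h1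
        rw [Finset.sum_singleton] at hS
        have := hsmall i; omega
    have hcastsum : ∀ S : Finset (Fin p), ∑ i ∈ S, m i = M / 2 →
        (∑ i ∈ S, (m i : ℝ)) = (M:ℝ)/2 := by
      intro S hS
      have h' : ((∑ i ∈ S, m i : ℕ) : ℝ) = ((M/2 : ℕ) : ℝ) := by exact_mod_cast hS
      push_cast at h'
      linarith
    set Q : Finset (Fin p) := if 2 * R.card ≤ p + 1 then R else Rᶜ with hQdef
    have hQsum : ∑ i ∈ Q, m i = M / 2 := by
      rw [hQdef]; split_ifs with h
      · exact hRsum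
      · have := hsum_compl R; omega
    have hRcard_le : R.card ≤ p := by
      have := Finset.card_le_univ R
      rwa [Fintype.card_fin] at this
    have hQk : 2 * Q.card ≤ p + 1 := by
      rw [hQdef]; split_ifs with h
      · exact h
      · have hcc : Rᶜ.card = p - R.card := by
          rw [Finset.card_compl, Fintype.card_fin]
        omega
    have hQcsum : ∑ i ∈ Qᶜ, m i = M / 2 := by have := hsum_compl Q; omega
    have hQ2 := hcard2 Q hQsum
    have hQc2 := hcard2 Qᶜ hQcsum
    have hQQc : Q.card + Qᶜ.card = p := by
      have := Finset.card_le_univ Q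
      rw [Fintype.card_fin] at this
      rw [Finset.card_compl, Fintype.card_fin]
      omega
    have hQsumR := hcastsum Q hQsum
    have hQcsumR := hcastsum Qᶜ hQcsum
    obtain ⟨g1, hg1Q, hg1max⟩ := Finset.exists_max_image Q m (Finset.card_pos.mp (by omega))
    obtain ⟨g, hg, g', hg', hgg'⟩ := Finset.one_lt_card.mp (by omega : 1 < Qᶜ.card)
    obtain ⟨hs1v, hs1m, hs1z, hs1c⟩ :=
      chainOn_spec p m α (le_of_lt hα0) m' hm' hmnn Q g1 hg1Q hg1max
    set s1 : GTree (p+2) := GTreeAux.chainAux (GTree.leaf (Fin.castAdd 2 g1))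
      (((Q.erase g1).toList).map (Fin.castAdd 2)) with hs1def
    rw [hQsumR] at hs1z hs1c
    -- construct s2
    have hs2ex : ∃ s2 : GTree (p+2), s2.valid ∧
        s2.members = insert (⟨p, by omega⟩ : Fin (p+2)) (Qᶜ.image (Fin.castAdd 2)) ∧
        s2.size m' = (M:ℝ) + (Qᶜ.card : ℝ) * α ∧
        s2.cost α 1 1 m' ≤ (M:ℝ) + ((Qᶜ.card : ℝ) + 3) * α := by
      have hg'e : g' ∈ Qᶜ.erase g := Finset.mem_erase.mpr ⟨Ne.symm hgg', hg'⟩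
      set rest : Finset (Fin p) := (Qᶜ.erase g).erase g' with hrest
      have hrest_sum : ∑ i ∈ rest, m i + m g' + m g = M / 2 := by
        have e1 := Finset.sum_erase_add Qᶜ m hg
        have e2 := Finset.sum_erase_add (Qᶜ.erase g) m hg'e
        rw [← hrest] at e2
        omega
      have hrest_card : rest.card + 2 = Qᶜ.card := by
        rw [hrest, Finset.card_erase_of_mem hg'e, Finset.card_erase_of_mem hg]
        have : 1 ≤ Qᶜ.card := by omega
        have h1 : 1 ≤ (Qᶜ.erase g).card := by
          rw [Finset.card_erase_of_mem hg]; omega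
        omega
      have hgrest : g ∉ rest := by
        rw [hrest]
        intro h
        exact (Finset.mem_erase.mp (Finset.mem_of_mem_erase h)).1 rfl
      have hg'rest : g' ∉ rest := by
        rw [hrest]
        intro h
        exact (Finset.mem_erase.mp h).1 rfl
      have hrest_le : rest.card ≤ p := by omega
      have hrcR : (rest.card : ℝ) + 2 = (Qᶜ.card : ℝ) := by exact_mod_cast hrest_card
      have hEgne : Fin.castAdd 2 g ≠ Fin.castAdd 2 g' := fun h => hgg' (hinj h)
      have hndgg : ([Fin.castAdd 2 g, Fin.castAdd 2 g'] : List (Fin (p+2))).Nodup := by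
        simp [hEgne]
      have hEg_ne_p : (Fin.castAdd 2 g : Fin (p+2)) ≠ ⟨p, by omega⟩ := by
        intro h
        have h2 := hEp g
        rw [h] at h2
        simp at h2
      have hEg'_ne_p : (Fin.castAdd 2 g' : Fin (p+2)) ≠ ⟨p, by omega⟩ := by
        intro h
        have h2 := hEp g'
        rw [h] at h2
        simp at h2
      by_cases hre : rest.Nonempty
      · -- rest nonempty : put a chain below the big node
        obtain ⟨g'', hg''r, hg''max⟩ := Finset.exists_max_image rest m hre
        obtain ⟨hc1v, hc1m, hc1z, hc1c⟩ :=
          chainOn_spec p m α (le_of_lt hα0) m' hm' hmnn rest g'' hg''r hg''max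
        set c1 : GTree (p+2) := GTreeAux.chainAux (GTree.leaf (Fin.castAdd 2 g''))
          (((rest.erase g'').toList).map (Fin.castAdd 2)) with hc1def
        have hrest1 : 1 ≤ rest.card := Finset.card_pos.mpr hre
        have hsrR : (∑ i ∈ rest, (m i:ℝ)) + (m g' : ℝ) + (m g : ℝ) = (M:ℝ)/2 := by
          have h' : ((∑ i ∈ rest, m i + m g' + m g : ℕ) : ℝ) = ((M/2 : ℕ) : ℝ) := by
            exact_mod_cast hrest_sum
          push_cast at h'
          linarith
        have hc1le : c1.cost α 1 1 m' ≤ (M:ℝ)/2 := by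
          rw [hc1c]
          have hcp : (rest.card : ℝ) ≤ (p:ℝ) := by exact_mod_cast hrest_le
          have hprod : (2 * (rest.card:ℝ) - 1) * α ≤ 2 * ((p:ℝ) * α) := by
            have : (2 * (rest.card:ℝ) - 1) ≤ 2 * (p:ℝ) := by linarith
            nlinarith [hα0.le]
          rw [hpα] at hprod
          have hg1' := hordge1 g
          have hg2' := hordge1 g'
          linarith
        have hbase_v : (GTree.node (GTree.leaf (⟨p, by omega⟩ : Fin (p+2))) c1).valid := by
          refine ⟨trivial, hc1v, ?_⟩
          show Disjoint ({(⟨p, by omega⟩ : Fin (p+2))} : Finset (Fin (p+2))) c1.members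
          rw [hc1m, Finset.disjoint_singleton_left]
          intro h
          obtain ⟨i, _, hi⟩ := Finset.mem_image.mp h
          have := hEp i
          have := congrArg Fin.val hi
          simp at this
          omega
        have hbase_c : (GTree.node (GTree.leaf (⟨p, by omega⟩ : Fin (p+2))) c1).cost α 1 1 m'
            = (M:ℝ)/2 + α + c1.size m' := by
          show max (1 * m' ⟨p, by omega⟩) (c1.cost α 1 1 m') + α + 1 * c1.size m' = _
          rw [one_mul, one_mul, hmp, max_eq_left hc1le]
        have hbase_z : (GTree.node (GTree.leaf (⟨p, by omega⟩ : Fin (p+2))) c1).size m'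
            = (M:ℝ)/2 + c1.size m' := by
          show m' ⟨p, by omega⟩ + c1.size m' = _
          rw [hmp]
        have hbase_m : (GTree.node (GTree.leaf (⟨p, by omega⟩ : Fin (p+2))) c1).members
            = insert (⟨p, by omega⟩ : Fin (p+2)) (rest.image (Fin.castAdd 2)) := by
          show ({(⟨p, by omega⟩ : Fin (p+2))} : Finset (Fin (p+2))) ∪ c1.members = _
          rw [hc1m]
          ext x
          simp [Finset.mem_union, Finset.mem_insert]
        obtain ⟨hv, hm2, hz2, hc2⟩ := GTreeAux.chainAux_spec α hα0.le m' hmnn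
          [Fin.castAdd 2 g, Fin.castAdd 2 g']
          (GTree.node (GTree.leaf (⟨p, by omega⟩ : Fin (p+2))) c1) hbase_v hndgg
          (by
            intro x hx
            rw [hbase_m, Finset.mem_insert]
            push_neg
            rcases List.mem_pair.mp hx with rfl | rfl
            · refine ⟨hEg_ne_p, ?_⟩
              intro h
              obtain ⟨i, hi, hie⟩ := Finset.mem_image.mp h
              exact hgrest (hinj hie ▸ hi)
            · refine ⟨hEg'_ne_p, ?_⟩
              intro h
              obtain ⟨i, hi, hie⟩ := Finset.mem_image.mp h
              exact hg'rest (hinj hie ▸ hi))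
          (by
            intro x hx
            rw [hbase_c]
            have hz : 0 ≤ c1.size m' := GTreeAux.size_nonneg m' hmnn c1
            rcases List.mem_pair.mp hx with rfl | rfl
            · rw [hm']; have := hordle g; linarith
            · rw [hm']; have := hordle g'; linarith)
        refine ⟨_, hv, ?_, ?_, ?_⟩
        · rw [hm2, hbase_m]
          ext x
          simp only [Finset.mem_union, Finset.mem_insert, Finset.mem_image,
            List.toFinset_cons, List.toFinset_nil, insert_empty_eq, Finset.mem_singleton]
          constructor
          · rintro ((rfl | ⟨i, hi, rfl⟩) | (rfl | rfl))
            · exact Or.inl rfl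
            · exact Or.inr ⟨i, by rw [hrest] at hi; exact Finset.mem_of_mem_erase (Finset.mem_of_mem_erase hi), rfl⟩
            · exact Or.inr ⟨g, hg, rfl⟩
            · exact Or.inr ⟨g', hg', rfl⟩
          · rintro (rfl | ⟨i, hi, rfl⟩)
            · exact Or.inl (Or.inl rfl)
            · by_cases h1 : i = g
              · subst h1; exact Or.inr (Or.inl rfl)
              · by_cases h2 : i = g'
                · subst h2; exact Or.inr (Or.inr rfl)
                · exact Or.inl (Or.inr ⟨i, by rw [hrest]; exact Finset.mem_erase.mpr ⟨h2, Finset.mem_erase.mpr ⟨h1, hi⟩⟩, rfl⟩)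
        · rw [hz2, hbase_z, hc1z]
          simp only [List.map_cons, List.map_nil, List.sum_cons, List.sum_nil, add_zero]
          rw [hm', hm']
          have hmul : ((rest.card:ℝ) + 2) * α = (Qᶜ.card:ℝ) * α := by rw [hrcR]
          nlinarith [hmul]
        · rw [hc2, hbase_c, hc1z]
          simp only [List.map_cons, List.map_nil, List.sum_cons, List.sum_nil, add_zero,
            List.length_cons, List.length_nil]
          rw [hm', hm']
          push_cast
          have hmul : ((rest.card:ℝ) + 2) * α = (Qᶜ.card:ℝ) * α := by rw [hrcR]
          nlinarith [hmul]
      · -- rest empty : Qᶜ = {g, g'}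
        rw [Finset.not_nonempty_iff_eq_empty] at hre
        have hQc_eq : Qᶜ = {g, g'} := by
          ext x
          simp only [Finset.mem_insert, Finset.mem_singleton]
          constructor
          · intro hx
            by_contra hcon
            push_neg at hcon
            have : x ∈ rest := by
              rw [hrest]
              exact Finset.mem_erase.mpr ⟨hcon.2, Finset.mem_erase.mpr ⟨hcon.1, hx⟩⟩
            rw [hre] at this
            exact absurd this (Finset.notMem_empty x)
          · rintro (rfl | rfl)
            · exact hg
            · exact hg'
        have hkc2 : Qᶜ.card = 2 := by
          rw [hQc_eq, Finset.card_insert_of_notMem (by simp [hgg']), Finset.card_singleton]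
        have hmm : m g + m g' = M / 2 := by
          have h' := hQcsum
          rw [hQc_eq, Finset.sum_insert (by simp [hgg']), Finset.sum_singleton] at h'
          omega
        have hmmR : (m g : ℝ) + (m g' : ℝ) = (M:ℝ)/2 := by
          have h' : ((m g + m g' : ℕ) : ℝ) = ((M/2 : ℕ) : ℝ) := by exact_mod_cast hmm
          push_cast at h'
          linarith
        obtain ⟨hv, hm2, hz2, hc2⟩ := GTreeAux.chainAux_spec α hα0.le m' hmnn
          [Fin.castAdd 2 g, Fin.castAdd 2 g']
          (GTree.leaf (⟨p, by omega⟩ : Fin (p+2))) trivial hndgg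
          (by
            intro x hx
            show x ∉ ({(⟨p, by omega⟩ : Fin (p+2))} : Finset (Fin (p+2)))
            rw [Finset.mem_singleton]
            rcases List.mem_pair.mp hx with rfl | rfl
            · exact hEg_ne_p
            · exact hEg'_ne_p)
          (by
            intro x hx
            show m' x ≤ 1 * m' ⟨p, by omega⟩
            rw [one_mul, hmp]
            rcases List.mem_pair.mp hx with rfl | rfl
            · rw [hm']; have := hordle g; linarith
            · rw [hm']; have := hordle g'; linarith)
        refine ⟨_, hv, ?_, ?_, ?_⟩
        · rw [hm2]
          show ({(⟨p, by omega⟩ : Fin (p+2))} : Finset (Fin (p+2))) ∪ _ = _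
          rw [hQc_eq]
          ext x
          simp [Finset.mem_union, Finset.mem_insert, Finset.image_insert]
          tauto
        · rw [hz2]
          show m' ⟨p, by omega⟩ + _ = _
          simp only [List.map_cons, List.map_nil, List.sum_cons, List.sum_nil, add_zero]
          rw [hmp, hm', hm', hkc2]
          push_cast
          linarith
        · rw [hc2]
          show 1 * m' ⟨p, by omega⟩ + _ + _ ≤ _
          simp only [List.map_cons, List.map_nil, List.sum_cons, List.sum_nil, add_zero,
            List.length_cons, List.length_nil]
          rw [one_mul, hmp, hm', hm', hkc2]
          push_cast
          linarith
    obtain ⟨s2, hs2v, hs2m, hs2z, hs2c⟩ := hs2ex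
    have he2_ne_im : ∀ i : Fin p, (⟨p+1, by omega⟩ : Fin (p+2)) ≠ Fin.castAdd 2 i := by
      intro i h
      have h2 := hEp i
      rw [← h] at h2
      simp at h2
    have hep_ne_im : ∀ i : Fin p, (⟨p, by omega⟩ : Fin (p+2)) ≠ Fin.castAdd 2 i := by
      intro i h
      have h2 := hEp i
      rw [← h] at h2
      simp at h2
    have he2ep : (⟨p+1, by omega⟩ : Fin (p+2)) ≠ ⟨p, by omega⟩ := by
      intro h
      have h2 := congrArg Fin.val h
      simp at h2
    refine ⟨GTree.node (GTree.node (GTree.leaf (⟨p+1, by omega⟩ : Fin (p+2))) s1) s2,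
      ⟨⟨trivial, hs1v, ?_⟩, hs2v, ?_⟩, ?_, ?_⟩
    · show Disjoint ({(⟨p+1, by omega⟩ : Fin (p+2))} : Finset (Fin (p+2))) s1.members
      rw [hs1m, Finset.disjoint_singleton_left]
      intro h
      obtain ⟨i, _, hi⟩ := Finset.mem_image.mp h
      exact he2_ne_im i hi.symm
    · show Disjoint (({(⟨p+1, by omega⟩ : Fin (p+2))} : Finset (Fin (p+2))) ∪ s1.members)
        s2.members
      rw [hs1m, hs2m, Finset.disjoint_left]
      intro x hx hx'
      rcases Finset.mem_union.mp hx with hx1 | hx2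
      · rw [Finset.mem_singleton] at hx1
        subst hx1
        rcases Finset.mem_insert.mp hx' with h | h
        · exact he2ep h
        · obtain ⟨i, _, hi⟩ := Finset.mem_image.mp h
          exact he2_ne_im i hi.symm
      · obtain ⟨i, hiQ, rfl⟩ := Finset.mem_image.mp hx2
        rcases Finset.mem_insert.mp hx' with h | h
        · exact hep_ne_im i h.symm
        · obtain ⟨i', hi', hii⟩ := Finset.mem_image.mp h
          rw [← hinj hii] at hiQ
          exact (Finset.mem_compl.mp hi') hiQ
    · show (({(⟨p+1, by omega⟩ : Fin (p+2))} : Finset (Fin (p+2))) ∪ s1.members) ∪ s2.members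
        = Finset.univ
      rw [hs1m, hs2m]
      ext j
      simp only [Finset.mem_union, Finset.mem_singleton, Finset.mem_insert,
        Finset.mem_image, Finset.mem_univ, iff_true]
      rcases hcases j with ⟨i, rfl⟩ | hj | hj
      · by_cases hiQ : i ∈ Q
        · exact Or.inl (Or.inr ⟨i, hiQ, rfl⟩)
        · exact Or.inr (Or.inr ⟨i, Finset.mem_compl.mpr hiQ, rfl⟩)
      · exact Or.inr (Or.inl (Fin.ext hj))
      · exact Or.inl (Or.inl (Fin.ext hj))
    · -- the cost bound
      show max (max (1 * m' ⟨p+1, by omega⟩) (s1.cost α 1 1 m') + α + 1 * s1.size m')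
          (s2.cost α 1 1 m') + α + 1 * s2.size m' ≤ B
      rw [one_mul, one_mul, one_mul, hmp1]
      have hkR : (2:ℝ) * (Q.card : ℝ) ≤ (p:ℝ) + 1 := by exact_mod_cast hQk
      have hkR2 : (2:ℝ) ≤ (Q.card : ℝ) := by exact_mod_cast hQ2
      have hkcR : (Q.card : ℝ) + (Qᶜ.card : ℝ) = (p:ℝ) := by exact_mod_cast hQQc
      have hs1cle : s1.cost α 1 1 m' ≤ (M:ℝ)/2 + 1 := by
        rw [hs1c]
        have hprod : (2 * (Q.card:ℝ) - 1) * α ≤ (p:ℝ) * α :=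
          mul_le_mul_of_nonneg_right (by linarith) hα0.le
        rw [hpα] at hprod
        linarith
      rw [max_eq_left hs1cle]
      have hmaxle : max ((M:ℝ)/2 + 1 + α + s1.size m') (s2.cost α 1 1 m')
          ≤ (M:ℝ) + 1 + ((Q.card:ℝ) + 1) * α := by
        apply max_le
        · rw [hs1z]; ring_nf; linarith
        · have hprod : ((Qᶜ.card:ℝ) + 3) * α ≤ ((p:ℝ) + (Q.card:ℝ) + 1) * α :=
            mul_le_mul_of_nonneg_right (by linarith) hα0.le
          have : ((p:ℝ) + (Q.card:ℝ) + 1) * α = 1 + ((Q.card:ℝ) + 1) * α := by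
            rw [add_mul, add_mul, hpα]; ring
          linarith
      rw [hs2z, hB]
      have : (M:ℝ) + 1 + ((Q.card:ℝ) + 1) * α + α + ((M:ℝ) + (Qᶜ.card:ℝ) * α)
          = 2 * (M:ℝ) + 1 + ((Q.card:ℝ) + (Qᶜ.card:ℝ)) * α + 2 * α := by ring
      have h1 : ((Q.card:ℝ) + (Qᶜ.card:ℝ)) * α = 1 := by rw [hkcR, hpα]
      linarith [le_max_left ((M:ℝ)/2 + 1 + α + s1.size m') (s2.cost α 1 1 m'), hmaxle]
  · -- converse: cheap tree ⟹ partition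
    rintro ⟨T, hTv, hTm, hTc⟩
    have hST : T.size m' = 2*(M:ℝ) + 2 := by
      rw [GTreeAux.size_eq_sum m' T hTv, hTm, sum_split' p m α m' hm']
      rw [if_pos (Finset.mem_univ _), if_pos (Finset.mem_univ _), hmp, hmp1]
      have hfil : Finset.univ.filter
          (fun i : Fin p => Fin.castAdd 2 i ∈ (Finset.univ : Finset (Fin (p+2)))) =
          Finset.univ :=
        Finset.filter_true_of_mem (fun i _ => Finset.mem_univ _)
      rw [hfil, hMsum, Finset.card_univ, Fintype.card_fin]
      linarith [hpα]
    rw [hB] at hTc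
    have hstep : ∀ a b : GTree (p+2),
        a.cost α 1 1 m' + α + b.size m' ≤ (GTree.node a b).cost α 1 1 m' := by
      intro a b
      simp only [GTree.cost, one_mul]
      have := le_max_left (a.cost α 1 1 m') (b.cost α 1 1 m')
      linarith
    cases T with
    | leaf r =>
      exfalso
      rw [show (GTree.leaf r).members = {r} from rfl] at hTm
      have hcard := congrArg Finset.card hTm
      rw [Finset.card_singleton, Finset.card_univ, Fintype.card_fin] at hcard
      omega
    | node t s2 =>
      cases t with
      | leaf r =>
        exfalso
        have hz : (GTree.node (GTree.leaf r) s2).size m' = m' r + s2.size m' := rfl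
        have hc : (GTree.node (GTree.leaf r) s2).cost α 1 1 m'
            = max (1 * m' r) (s2.cost α 1 1 m') + α + 1 * s2.size m' := rfl
        rw [hc] at hTc
        have h1 : s2.cost α 1 1 m' ≤ max (1 * m' r) (s2.cost α 1 1 m') := le_max_right _ _
        have hs2z := GTreeAux.cost_ge_size α hα0.le m' hmnn s2
        have h3 := hm'le r
        have h4 : m' r + s2.size m' = 2*(M:ℝ)+2 := by rw [← hz, hST]
        linarith
      | node t' s1 =>
        cases t' with
        | node u s0 =>
          exfalso
          have hzT : (GTree.node (GTree.node (GTree.node u s0) s1) s2).size m'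
              = u.size m' + s0.size m' + s1.size m' + s2.size m' := by
            simp only [GTree.size]
          have h1 := hstep (GTree.node (GTree.node u s0) s1) s2
          have h2 := hstep (GTree.node u s0) s1
          have h3 := hstep u s0
          have h4 := GTreeAux.cost_ge_size α hα0.le m' hmnn u
          rw [hzT] at hST
          linarith
        | leaf r =>
          -- main case : T = node (node (leaf r) s1) s2
          obtain ⟨⟨-, hv1, hd1⟩, hv2, hd2⟩ := hTv
          have hz1 := GTreeAux.size_eq_sum m' s1 hv1
          have hz2 := GTreeAux.size_eq_sum m' s2 hv2
          have hr1 : r ∉ s1.members :=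
            Finset.disjoint_singleton_left.mp hd1
          have hr2 : r ∉ s2.members := fun h =>
            (Finset.disjoint_left.mp hd2
              (Finset.mem_union_left _ (Finset.mem_singleton_self r))) h
          have hd12 : ∀ x, x ∈ s1.members → x ∉ s2.members := fun x hx =>
            Finset.disjoint_left.mp hd2 (Finset.mem_union_right _ hx)
          have hmem_all : ∀ j : Fin (p+2), j = r ∨ j ∈ s1.members ∨ j ∈ s2.members := by
            intro j
            have hj := Finset.mem_univ j
            rw [← hTm] at hj
            simp only [GTree.members, Finset.mem_union, Finset.mem_singleton] at hj
            tauto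
          have htotal : m' r + s1.size m' + s2.size m' = 2*(M:ℝ)+2 := by
            rw [show (GTree.node (GTree.node (GTree.leaf r) s1) s2).size m'
              = m' r + s1.size m' + s2.size m' by simp only [GTree.size]] at hST
            exact hST
          simp only [GTree.cost, one_mul] at hTc
          have hkey1 : s1.cost α 1 1 m' ≤ m' r := by
            have hA := le_max_left
              (max (m' r) (s1.cost α 1 1 m') + α + s1.size m') (s2.cost α 1 1 m')
            have hB' := le_max_right (m' r) (s1.cost α 1 1 m')
            linarith
          have hkey2 : s2.cost α 1 1 m' ≤ m' r + s1.size m' + α := by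
            have hA := le_max_right
              (max (m' r) (s1.cost α 1 1 m') + α + s1.size m') (s2.cost α 1 1 m')
            linarith
          have hz1le := GTreeAux.cost_ge_size α hα0.le m' hmnn s1
          have hz2le := GTreeAux.cost_ge_size α hα0.le m' hmnn s2
          rcases hcases r with ⟨i, rfl⟩ | hrp | hrp1
          · exfalso
            have hmr := hm' i
            have := hordle i
            linarith
          · exfalso
            have hmr := hvalp r hrp
            linarith
          · -- the root is processor p+1
            have hmr := hvalp1 r hrp1
            have hre2 : r = (⟨p+1, by omega⟩ : Fin (p+2)) := Fin.ext hrp1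
            have hz1s := hz1
            rw [sum_split' p m α m' hm' s1.members] at hz1s
            have he2nm1 : (⟨p+1, by omega⟩ : Fin (p+2)) ∉ s1.members := hre2 ▸ hr1
            have he2nm2 : (⟨p+1, by omega⟩ : Fin (p+2)) ∉ s2.members := hre2 ▸ hr2
            rw [if_neg he2nm1, add_zero] at hz1s
            set O1 : Finset (Fin p) :=
              Finset.univ.filter (fun i : Fin p => Fin.castAdd 2 i ∈ s1.members) with hO1d
            have hrne : ∀ j : Fin (p+2), j.val ≠ p + 1 → j ≠ r := by
              intro j hj h
              rw [h, hrp1] at hj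
              exact hj rfl
            have hmkp_ne : ((⟨p, by omega⟩ : Fin (p+2)) : Fin (p+2)).val ≠ p + 1 := by
              simp
            have hEne : ∀ i : Fin p, (Fin.castAdd 2 i).val ≠ p + 1 := by
              intro i
              have := hEp i
              omega
            have heploc : (⟨p, by omega⟩ : Fin (p+2)) ∈ s1.members ∨
                (⟨p, by omega⟩ : Fin (p+2)) ∈ s2.members := by
              rcases hmem_all ⟨p, by omega⟩ with h | h | h
              · exact absurd h (hrne _ hmkp_ne)
              · exact Or.inl h
              · exact Or.inr h
            have hz2s := hz2
            rw [sum_split' p m α m' hm' s2.members] at hz2s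
            rw [if_neg he2nm2, add_zero] at hz2s
            rcases heploc with hepM | hepM
            · -- the other big block is received first : impossible
              exfalso
              rw [if_pos hepM, hmp] at hz1s
              have hk1a : ((O1.card : ℕ) : ℝ) ≤ ∑ i ∈ O1, (m i:ℝ) := by
                calc ((O1.card : ℕ) : ℝ) = ∑ _i ∈ O1, (1:ℝ) := by
                      rw [Finset.sum_const, nsmul_eq_mul, mul_one]
                  _ ≤ _ := Finset.sum_le_sum (fun i _ => hordge1 i)
              have hz1ub : s1.size m' ≤ m' r := le_trans hz1le hkey1
              have hk10 : O1.card = 0 := by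
                by_contra hcN
                have h1N : (1:ℝ) ≤ ((O1.card : ℕ) : ℝ) := by
                  exact_mod_cast Nat.one_le_iff_ne_zero.mpr hcN
                nlinarith [hα0]
              have hO1e : O1 = ∅ := Finset.card_eq_zero.mp hk10
              have hz1v : s1.size m' = (M:ℝ)/2 := by
                rw [hz1s, hO1e]
                simp
              have hepM2 : (⟨p, by omega⟩ : Fin (p+2)) ∉ s2.members := hd12 _ hepM
              have hordM2 : ∀ i : Fin p, Fin.castAdd 2 i ∈ s2.members := by
                intro i
                rcases hmem_all (Fin.castAdd 2 i) with h | h | h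
                · exact absurd h (hrne _ (hEne i))
                · exfalso
                  have hi : i ∈ O1 := by
                    rw [hO1d]
                    exact Finset.mem_filter.mpr ⟨Finset.mem_univ _, h⟩
                  rw [hO1e] at hi
                  exact absurd hi (Finset.notMem_empty i)
                · exact h
              rw [if_neg hepM2, add_zero,
                Finset.filter_true_of_mem (fun i _ => hordM2 i), hMsum,
                Finset.card_univ, Fintype.card_fin] at hz2s
              -- hz2s : s2.size m' = M + p * α = M + 1
              have hz2v : s2.size m' = (M:ℝ) + 1 := by rw [hz2s, hpα]
              have hc2ub : s2.cost α 1 1 m' ≤ (M:ℝ) + 1 + α := by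
                rw [hmr, hz1v] at hkey2
                linarith
              cases s2 with
              | leaf j =>
                rw [show (GTree.leaf j).size m' = m' j from rfl] at hz2v
                have := hm'le j
                linarith
              | node t2 s3 =>
                cases t2 with
                | node a b =>
                  have hcg := GTreeAux.cost_ge α hα0.le m' hmnn
                    (GTree.node (GTree.node a b) s3)
                  rw [show (GTree.node (GTree.node a b) s3).rootDeg
                    = a.rootDeg + 1 + 1 from rfl] at hcg
                  have hdeg : (2:ℝ) ≤ ((a.rootDeg + 1 + 1 : ℕ) : ℝ) := by
                    push_cast
                    have : (0:ℝ) ≤ (a.rootDeg : ℝ) := Nat.cast_nonneg _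
                    linarith
                  have hprod : 2 * α ≤ ((a.rootDeg + 1 + 1 : ℕ) : ℝ) * α :=
                    mul_le_mul_of_nonneg_right hdeg hα0.le
                  linarith
                | leaf j =>
                  have hjmem : j ∈ (GTree.node (GTree.leaf j) s3).members :=
                    Finset.mem_union_left _ (Finset.mem_singleton_self j)
                  rcases hcases j with ⟨i, rfl⟩ | hj | hj
                  · have hc2eq : (GTree.node (GTree.leaf (Fin.castAdd 2 i)) s3).cost α 1 1 m'
                        = max (1 * m' (Fin.castAdd 2 i)) (s3.cost α 1 1 m') + α + 1 * s3.size m' :=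
                      rfl
                    have hz3eq : (GTree.node (GTree.leaf (Fin.castAdd 2 i)) s3).size m'
                        = m' (Fin.castAdd 2 i) + s3.size m' := rfl
                    have hs3le := GTreeAux.cost_ge_size α hα0.le m' hmnn s3
                    have h1 : s3.cost α 1 1 m'
                        ≤ max (1 * m' (Fin.castAdd 2 i)) (s3.cost α 1 1 m') := le_max_right _ _
                    rw [hc2eq] at hc2ub
                    rw [hz3eq, hm'] at hz2v
                    have horl := hordle i
                    linarith
                  · have hje : j = (⟨p, by omega⟩ : Fin (p+2)) := Fin.ext hj
                    rw [hje] at hjmem hepM2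
                    exact hepM2 hjmem
                  · have hje : j = (⟨p+1, by omega⟩ : Fin (p+2)) := Fin.ext hj
                    rw [hje] at hjmem hr2
                    rw [hre2] at hr2
                    exact hr2 hjmem
            · -- the partition case
              have hepM1 : (⟨p, by omega⟩ : Fin (p+2)) ∉ s1.members := fun h => hd12 _ h hepM
              rw [if_neg hepM1, add_zero] at hz1s
              rw [if_pos hepM, hmp] at hz2s
              set O2 : Finset (Fin p) :=
                Finset.univ.filter (fun i : Fin p => Fin.castAdd 2 i ∈ s2.members) with hO2d
              have hO2c : O2 = O1ᶜ := by
                ext i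
                rw [hO2d, hO1d, Finset.mem_filter, Finset.mem_compl, Finset.mem_filter]
                simp only [Finset.mem_univ, true_and]
                constructor
                · intro h h'
                  exact hd12 _ h' h
                · intro h
                  rcases hmem_all (Fin.castAdd 2 i) with h' | h' | h'
                  · exact absurd h' (hrne _ (hEne i))
                  · exact absurd h' h
                  · exact h'
              have hsum12 : (∑ i ∈ O1, (m i:ℝ)) + (∑ i ∈ O2, (m i:ℝ)) = (M:ℝ) := by
                rw [hO2c, Finset.sum_add_sum_compl, hMsum]
              have hcard12 : O1.card + O2.card = p := by
                rw [hO2c]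
                rw [Finset.card_add_card_compl, Fintype.card_fin]
              -- O1 is nonempty
              obtain ⟨x, hx⟩ := GTreeAux.members_nonempty s1
              have hxord : ∃ i : Fin p, x = Fin.castAdd 2 i := by
                rcases hcases x with h | h | h
                · exact h
                · exact absurd hx (by rw [show x = (⟨p, by omega⟩ : Fin (p+2)) from Fin.ext h]; exact hepM1)
                · exact absurd hx (by rw [show x = (⟨p+1, by omega⟩ : Fin (p+2)) from Fin.ext h, ← hre2]; exact hr1)
              obtain ⟨i1, rfl⟩ := hxord
              have hk11 : 1 ≤ O1.card := Finset.card_pos.mpr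
                ⟨i1, by rw [hO1d]; exact Finset.mem_filter.mpr ⟨Finset.mem_univ _, hx⟩⟩
              have hk1p : O1.card ≤ p := by
                have := Finset.card_le_univ O1
                rwa [Fintype.card_fin] at this
              have ha1k : (∑ i ∈ O1, (m i:ℝ)) + (O1.card:ℝ) * α ≤ (M:ℝ)/2 + 1 := by
                rw [← hz1s, ← hmr]
                exact le_trans hz1le hkey1
              have hk1R : (1:ℝ) ≤ (O1.card:ℝ) := by exact_mod_cast hk11
              -- aN ≤ M/2
              have haN_lt : (∑ i ∈ O1, m i) < M / 2 + 1 := by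
                have h1 : ((∑ i ∈ O1, m i : ℕ) : ℝ) < ((M/2 : ℕ):ℝ) + 1 := by
                  push_cast
                  nlinarith [hα0]
                exact_mod_cast h1
              have haN_le : (∑ i ∈ O1, m i) ≤ M / 2 := by omega
              -- the key inequality
              have hc2lb := le_trans hz2le hkey2
              rw [hz2s, hz1s, hmr] at hc2lb
              have hcast2 : ((∑ i ∈ O1, m i : ℕ) : ℝ) = ∑ i ∈ O1, (m i:ℝ) := by push_cast; rfl
              by_cases hk1full : O1.card = p
              · exfalso
                have hO1u : O1 = Finset.univ := by
                  apply Finset.eq_univ_of_card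
                  rw [hk1full, Fintype.card_fin]
                have : (∑ i ∈ O1, m i) = M := by rw [hO1u, ← hM]
                omega
              · have hk1lt : O1.card ≤ p - 1 := by omega
                have hk1ltR : (O1.card : ℝ) ≤ (p:ℝ) - 1 := by
                  have h' : (O1.card : ℝ) ≤ ((p - 1 : ℕ) : ℝ) := by exact_mod_cast hk1lt
                  have : ((p - 1 : ℕ) : ℝ) = (p:ℝ) - 1 := by
                    have : 1 ≤ p := hp
                    push_cast [Nat.cast_sub this]
                    ring
                  linarith
                have hcard2R : (O2.card : ℝ) = (p:ℝ) - (O1.card:ℝ) := by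
                  have : ((O1.card + O2.card : ℕ) : ℝ) = (p:ℝ) := by exact_mod_cast hcard12
                  push_cast at this
                  linarith
                have hsum2R : (∑ i ∈ O2, (m i:ℝ)) = (M:ℝ) - (∑ i ∈ O1, (m i:ℝ)) := by
                  linarith
                -- expand hc2lb
                rw [hsum2R, hcard2R] at hc2lb
                -- hc2lb : (M - a1) + (p - k1)*α + M/2 ≤ M/2 + 1 + (a1 + k1*α) + α
                have hexp : ((p:ℝ) - (O1.card:ℝ)) * α = 1 - (O1.card:ℝ) * α := by
                  rw [sub_mul]
                  rw [hpα]
                have hfin : (M:ℝ) - 2 * (∑ i ∈ O1, (m i:ℝ)) < 2 := by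
                  have hprodlt : (O1.card:ℝ) * α ≤ ((p:ℝ) - 1) * α :=
                    mul_le_mul_of_nonneg_right hk1ltR hα0.le
                  have hp1a : ((p:ℝ) - 1) * α = 1 - α := by
                    rw [sub_mul, hpα, one_mul]
                  nlinarith [hα0]
                have hMlt : M < 2 * (∑ i ∈ O1, m i) + 2 := by
                  have : (M:ℝ) < 2 * ((∑ i ∈ O1, m i : ℕ) : ℝ) + 2 := by
                    rw [hcast2]
                    linarith
                  exact_mod_cast this
                exact ⟨O1, by omega⟩
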